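/- arXiv:2207.04379 — 2 statements merged into one kernel-verified Lean document; each statement's English description precedes it below -/
import Mathlib

section
/- Let θ ∈ ℚ_p, θ ≠ 0 and θ ≠ 4, and suppose z satisfies z² + (2 - θ)z + 1 = 0. Then z is not a fixed point of f(z) = θ/(1+z)², i.e., z(1+z)² ≠ θ, but z is a 2-periodic point: f(f(z)) = z. -/
theorem quadratic_root_is_two_periodic (p : ℕ) [Fact p.Prime] (θ : ℚ_[p])
    (hθ0 : θ ≠ 0) (hθ4 : θ ≠ 4) (z : ℚ_[p]) (hz : z ^ 2 + (2 - θ) * z + 1 = 0) :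
    z * (1 + z) ^ 2 ≠ θ ∧ θ / (1 + θ / (1 + z) ^ 2) ^ 2 = z := by
  have hz0 : z ≠ 0 := by
    intro h; rw [h] at hz; simp at hz
  have hz1 : (1 : ℚ_[p]) + z ≠ 0 := by
    intro h
    have hzn : z = -1 := by linear_combination h
    rw [hzn] at hz
    exact hθ0 (by linear_combination hz)
  have key : (1 + z) ^ 2 = θ * z := by linear_combination hz
  constructor
  · intro h
    have hmul : θ * (z ^ 2 - 1) = 0 := by linear_combination h - z * key
    have hz2 : z ^ 2 - 1 = 0 := by
      rcases mul_eq_zero.mp hmul with h' | h'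
      · exact absurd h' hθ0
      · exact h'
    rcases mul_eq_zero.mp (show (z - 1) * (z + 1) = 0 by linear_combination hz2) with h' | h'
    · have hze : z = 1 := by linear_combination h'
      rw [hze] at hz
      exact hθ4 (by linear_combination -hz)
    · exact hz1 (by linear_combination h')
  · have h2 : ((1 + z) ^ 2) ≠ 0 := pow_ne_zero 2 hz1
    have hstep : 1 + θ / (1 + z) ^ 2 = (1 + z) / z := by
      field_simp
      linear_combination -key
    rw [hstep, div_pow, div_div_eq_mul_div, key]
    rw [div_eq_iff (by exact mul_ne_zero hθ0 hz0)]
    ring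
end

section
/- Let p > 3 be a prime and θ ∈ ℚ_p with |θ + 2/27|_p < 1 and such that -a_0 is a quadratic residue mod p, where a_0 is the leading p-adic digit of -1/3. Then the cubic t³ - t/3 = θ + 2/27 has exactly three solutions in ℚ_p. -/
open Polynomial

lemma myToZMod_eq_zero_iff {p : ℕ} [Fact p.Prime] (x : ℤ_[p]) :
    PadicInt.toZMod x = 0 ↔ ‖x‖ < 1 := by
  rw [← RingHom.mem_ker, PadicInt.ker_toZMod, IsLocalRing.mem_maximalIdeal,
    mem_nonunits_iff, PadicInt.not_isUnit_iff]

lemma hensel_aux {p : ℕ} [Fact p.Prime] (d : ℤ_[p]) (hd : ‖d‖ < 1) (x : ZMod p)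
    (hx : 3 * x ^ 3 - x = 0) (hx' : (9 : ZMod p) * x ^ 2 - 1 ≠ 0) :
    ∃ z : ℤ_[p], 3 * z ^ 3 - z - 3 * d = 0 ∧ PadicInt.toZMod z = x ∧
      ∀ z' : ℤ_[p], 3 * z' ^ 3 - z' - 3 * d = 0 → PadicInt.toZMod z' = x → z' = z := by
  set a : ℤ_[p] := ((x.val : ℕ) : ℤ_[p]) with ha_def
  have ha : PadicInt.toZMod a = x := by
    rw [ha_def, map_natCast, ZMod.natCast_val, ZMod.cast_id]
  set F : Polynomial ℤ_[p] := C 3 * X ^ 3 - X - C (3 * d) with hF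
  have hFeval : ∀ z : ℤ_[p], F.eval z = 3 * z ^ 3 - z - 3 * d := by
    intro z; simp [hF]
  have hFder : ∀ z : ℤ_[p], F.derivative.eval z = 9 * z ^ 2 - 1 := by
    intro z; simp [hF]; ring
  have hdzero : PadicInt.toZMod d = 0 := (myToZMod_eq_zero_iff d).2 hd
  have hda : ‖F.derivative.eval a‖ = 1 := by
    refine le_antisymm (PadicInt.norm_le_one _) ?_
    by_contra h
    push_neg at h
    have := (myToZMod_eq_zero_iff _).2 h
    rw [hFder] at this
    apply hx'
    have h9 : PadicInt.toZMod (9 : ℤ_[p]) = 9 := map_ofNat _ 9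
    simpa [map_sub, map_mul, map_pow, ha, h9] using this
  have hea : ‖F.eval a‖ < 1 := by
    rw [← myToZMod_eq_zero_iff, hFeval]
    have h3 : PadicInt.toZMod (3 : ℤ_[p]) = 3 := map_ofNat _ 3
    simp only [map_sub, map_mul, map_pow, ha, h3, hdzero, mul_zero, sub_zero]
    exact hx
  have hnorm : ‖F.eval a‖ < ‖F.derivative.eval a‖ ^ 2 := by
    rw [hda]; simpa using hea
  obtain ⟨z, hz, hznear, -, huniq⟩ := hensels_lemma hnorm
  simp only [coe_aeval_eq_eval] at hz hznear huniq
  rw [hda] at hznear huniq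
  have hzx : PadicInt.toZMod z = x := by
    have : PadicInt.toZMod (z - a) = 0 := (myToZMod_eq_zero_iff _).2 hznear
    rw [map_sub, sub_eq_zero, ha] at this
    exact this
  refine ⟨z, by rw [← hFeval]; exact hz, hzx, ?_⟩
  intro z' hz' hz'x
  apply huniq
  · rw [hFeval]; exact hz'
  · rw [← myToZMod_eq_zero_iff, map_sub, ha, hz'x, sub_self]

theorem cubic_three_solutions_of_small_norm (p : ℕ) [Fact p.Prime] (hp : 3 < p)
    (θ : ℚ_[p]) (hθ : ‖θ + 2 / 27‖ < 1)
    (hQR : IsSquare ((3 : ZMod p)⁻¹)) :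
    {t : ℚ_[p] | t ^ 3 - t / 3 = θ + 2 / 27}.ncard = 3 := by
  have pp : p.Prime := Fact.out
  set c : ℚ_[p] := θ + 2 / 27 with hc_def
  -- basic non-vanishing facts mod p
  have h3Z : (3 : ZMod p) ≠ 0 := by
    intro h
    have hd3 := (ZMod.natCast_eq_zero_iff 3 p).1 (by exact_mod_cast h)
    exact absurd (Nat.le_of_dvd (by norm_num) hd3) (by omega)
  have h2Z : (2 : ZMod p) ≠ 0 := by
    have : ¬ (p ∣ 2) := fun h => absurd (Nat.le_of_dvd (by norm_num) h) (by omega)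
    exact fun h => this ((ZMod.natCast_eq_zero_iff 2 p).1 (by exact_mod_cast h))
  have h1Z : (1 : ZMod p) ≠ 0 := one_ne_zero
  obtain ⟨s, hs⟩ := hQR
  have h3s2 : (3 : ZMod p) * s ^ 2 = 1 := by
    rw [pow_two, ← hs, mul_inv_cancel₀ h3Z]
  have hsne : s ≠ 0 := by
    intro h; rw [h, mul_zero] at hs; exact (inv_ne_zero h3Z) hs
  -- norm of 3 in ℚ_p
  have h3norm : ‖(3 : ℚ_[p])‖ = 1 := by
    have : ‖(3 : ℤ_[p])‖ = 1 := by
      refine le_antisymm (PadicInt.norm_le_one _) ?_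
      by_contra h
      push_neg at h
      have := (myToZMod_eq_zero_iff _).2 h
      rw [map_ofNat] at this
      exact h3Z this
    rw [show (3 : ℚ_[p]) = ((3 : ℤ_[p]) : ℚ_[p]) by norm_cast, ← PadicInt.norm_def]
    exact this
  have h3ne : (3 : ℚ_[p]) ≠ 0 := by
    intro h; rw [h, norm_zero] at h3norm; norm_num at h3norm
  set d : ℤ_[p] := ⟨c, hθ.le⟩ with hd_def
  have hdc : (d : ℚ_[p]) = c := rfl
  have hd : ‖d‖ < 1 := hθ
  -- three roots mod p
  have root0 : (3 : ZMod p) * 0 ^ 3 - 0 = 0 := by ring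
  have der0 : (9 : ZMod p) * 0 ^ 2 - 1 ≠ 0 := by
    intro h; exact h1Z (by linear_combination -h)
  have roots : ∀ x : ZMod p, x = s ∨ x = -s → (3 * x ^ 3 - x = 0 ∧ (9:ZMod p) * x ^ 2 - 1 ≠ 0) := by
    intro x hx
    have hx2 : x ^ 2 = s ^ 2 := by rcases hx with h | h <;> rw [h] <;> ring
    constructor
    · have : x ^ 3 = x * x ^ 2 := by ring
      rw [this, hx2]
      linear_combination x * h3s2
    · intro h
      apply h2Z
      have h9 : (9 : ZMod p) * s ^ 2 = 3 := by linear_combination 3 * h3s2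
      rw [hx2, h9] at h
      linear_combination h
  obtain ⟨z₀, hz₀, hz₀x, hz₀u⟩ := hensel_aux d hd 0 root0 der0
  obtain ⟨z₁, hz₁, hz₁x, hz₁u⟩ := hensel_aux d hd s (roots s (Or.inl rfl)).1 (roots s (Or.inl rfl)).2
  obtain ⟨z₂, hz₂, hz₂x, hz₂u⟩ := hensel_aux d hd (-s) (roots (-s) (Or.inr rfl)).1 (roots (-s) (Or.inr rfl)).2
  have hsns : s ≠ -s := by
    intro h
    apply hsne
    have : (2 : ZMod p) * s = 0 := by linear_combination h
    rcases mul_eq_zero.1 this with h' | h'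
    · exact absurd h' h2Z
    · exact h'
  -- the roots satisfy the original equation
  have hsol : ∀ z : ℤ_[p], 3 * z ^ 3 - z - 3 * d = 0 → ((z : ℚ_[p]) ∈ {t : ℚ_[p] | t ^ 3 - t / 3 = c}) := by
    intro z hz
    have h33 : ((3 : ℤ_[p]) : ℚ_[p]) = (3 : ℚ_[p]) := by norm_cast
    have : (3 : ℚ_[p]) * (z:ℚ_[p]) ^ 3 - (z:ℚ_[p]) - 3 * c = 0 := by
      have h1 := congrArg (fun w : ℤ_[p] => (w : ℚ_[p])) hz
      push_cast [h33] at h1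
      exact h1
    show (z:ℚ_[p]) ^ 3 - (z:ℚ_[p]) / 3 = c
    field_simp
    linear_combination this
  -- set equality
  have hset : {t : ℚ_[p] | t ^ 3 - t / 3 = c} = {(z₀ : ℚ_[p]), (z₁ : ℚ_[p]), (z₂ : ℚ_[p])} := by
    ext t
    constructor
    · intro ht
      have ht' : t ^ 3 - t / 3 = c := ht
      -- t is integral
      have htle : ‖t‖ ≤ 1 := by
        by_contra h
        push_neg at h
        have hcube : ‖t ^ 3‖ = ‖t‖ ^ 3 := norm_pow t 3
        have hdiv : ‖t / 3‖ = ‖t‖ := by rw [norm_div, h3norm, div_one]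
        have hle : ‖t ^ 3‖ ≤ max ‖t ^ 3 - t / 3‖ ‖t / 3‖ := by
          have := Padic.nonarchimedean (t ^ 3 - t / 3) (t / 3)
          simpa using this
        rw [ht', hcube, hdiv] at hle
        have h1 : (1:ℝ) < ‖t‖ := h
        have h0 : (0:ℝ) < ‖t‖ := lt_trans one_pos h1
        have hc1 : (1:ℝ) < ‖t‖ ^ 3 := one_lt_pow₀ h1 (by norm_num)
        have h2 : ‖t‖ < ‖t‖ ^ 3 := by
          calc ‖t‖ = ‖t‖ * 1 := (mul_one _).symm
            _ < ‖t‖ * (‖t‖ * ‖t‖) := by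
                apply mul_lt_mul_of_pos_left _ h0
                nlinarith
            _ = ‖t‖ ^ 3 := by ring
        rcases le_max_iff.1 hle with h' | h'
        · linarith
        · linarith
      set z : ℤ_[p] := ⟨t, htle⟩ with hz_def
      have hzt : (z : ℚ_[p]) = t := rfl
      have hzeq : 3 * z ^ 3 - z - 3 * d = 0 := by
        have h33 : ((3 : ℤ_[p]) : ℚ_[p]) = (3 : ℚ_[p]) := by norm_cast
        have hcast : ((3 * z ^ 3 - z - 3 * d : ℤ_[p]) : ℚ_[p]) = 0 := by
          push_cast [h33]
          field_simp at ht'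
          linear_combination ht'
        exact Subtype.coe_injective hcast
      set x : ZMod p := PadicInt.toZMod z with hx_def
      have hxeq : 3 * x ^ 3 - x = 0 := by
        have := congrArg PadicInt.toZMod hzeq
        have hdz : PadicInt.toZMod d = 0 := (myToZMod_eq_zero_iff d).2 hd
        have h3' : PadicInt.toZMod (3 : ℤ_[p]) = 3 := map_ofNat _ 3
        simpa [map_sub, map_mul, map_pow, h3', hdz, ← hx_def] using this
      have hxcases : x = 0 ∨ x = s ∨ x = -s := by
        have hfac : (3 : ZMod p) * x * (x - s) * (x + s) = 0 := by
          linear_combination hxeq - x * h3s2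
        rcases mul_eq_zero.1 hfac with h' | h'
        · rcases mul_eq_zero.1 h' with h'' | h''
          · rcases mul_eq_zero.1 h'' with h3z | hx0
            · exact absurd h3z h3Z
            · exact Or.inl hx0
          · exact Or.inr (Or.inl (by linear_combination h''))
        · exact Or.inr (Or.inr (by linear_combination h'))
      have hmem : t = ↑z₀ ∨ t = ↑z₁ ∨ t = ↑z₂ := by
        rcases hxcases with h | h | h
        · exact Or.inl (by rw [← hzt, hz₀u z hzeq h])
        · exact Or.inr (Or.inl (by rw [← hzt, hz₁u z hzeq h]))
        · exact Or.inr (Or.inr (by rw [← hzt, hz₂u z hzeq h]))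
      simpa [Set.mem_insert_iff] using hmem
    · intro ht
      rcases ht with h | h | h <;> rw [h]
      · exact hsol z₀ hz₀
      · exact hsol z₁ hz₁
      · exact hsol z₂ hz₂
  have hinj : Function.Injective ((↑) : ℤ_[p] → ℚ_[p]) := Subtype.coe_injective
  have hne01 : (z₀ : ℚ_[p]) ≠ z₁ := by
    intro h
    apply hsne
    have := hinj h
    rw [← hz₀x, ← hz₁x, this]
  have hne02 : (z₀ : ℚ_[p]) ≠ z₂ := by
    intro h
    have := hinj h
    have h' : (0 : ZMod p) = -s := by rw [← hz₀x, ← hz₂x, this]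
    exact hsne (by rw [← neg_neg s, ← h', neg_zero])
  have hne12 : (z₁ : ℚ_[p]) ≠ z₂ := by
    intro h
    have h2 : PadicInt.toZMod z₁ = PadicInt.toZMod z₂ := congrArg _ (hinj h)
    rw [hz₁x, hz₂x] at h2
    exact hsns h2
  rw [Set.ncard_eq_three]
  exact ⟨_, _, _, hne01, hne02, hne12, hset⟩
end
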